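/- Let A be an n-central element of an n-dimensional algebra (with operation q and constants e₁,...,eₙ). Then for every n×n matrix x of elements, q(c, q(c, x₁), ..., q(c, xₙ)) = q(c, x¹₁, x²₂, ..., xⁿₙ), i.e., nested applications of q with the same central first argument select the diagonal. -/
import Mathlib

/-- An algebraic signature: a type of operation symbols with arities. -/
structure Signature where
  ops : Type
  ar : ops → ℕ

/-- An algebra of dimension `n`: constants `e₁,…,eₙ` and an `(n+1)`-ary operation `q`
satisfying `q(eᵢ,x₁,…,xₙ) = xᵢ`, besides the basic operations of the signature. -/
structure NDA (S : Signature) (n : ℕ) where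
  A : Type
  op : ∀ o : S.ops, (Fin (S.ar o) → A) → A
  e : Fin n → A
  q : A → (Fin n → A) → A
  q_e : ∀ (i : Fin n) (x : Fin n → A), q (e i) x = x i

/-- `c` is an `n`-central element: (B1) `q(c,e₁,…,eₙ) = c`; (B2) `q(c,x,…,x) = x`;
(B3) `q(c,-)` commutes with every basic operation and with `q` itself. -/
def NDA.IsCentral {S : Signature} {n : ℕ} (B : NDA S n) (c : B.A) : Prop :=
  B.q c B.e = c ∧
  (∀ x : B.A, B.q c (fun _ => x) = x) ∧
  (∀ (o : S.ops) (m : Fin n → Fin (S.ar o) → B.A),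
    B.q c (fun i => B.op o (m i)) = B.op o (fun j => B.q c (fun i => m i j))) ∧
  (∀ (a : Fin n → B.A) (m : Fin n → Fin n → B.A),
    B.q c (fun i => B.q (a i) (m i)) = B.q (B.q c a) (fun j => B.q c (fun i => m i j)))

/-- (B4) For an `n`-central element `c` and any `n×n` matrix `m` of elements,
`q(c, q(c,m₁),…,q(c,mₙ)) = q(c, m¹₁, m²₂, …, mⁿₙ)`: nested applications of `q` with the
same central first argument select the diagonal. -/
theorem central_diagonal {S : Signature} {n : ℕ} (B : NDA S n) (c : B.A)
    (hc : B.IsCentral c) (m : Fin n → Fin n → B.A) :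
    B.q c (fun i => B.q c (m i)) = B.q c (fun i => m i i) := by
  obtain ⟨h1, _, _, h3⟩ := hc
  have key : ∀ M : Fin n → Fin n → B.A,
      B.q c (fun j => B.q c (fun i => M i j)) = B.q c (fun i => M i i) := by
    intro M
    have := h3 B.e M
    simp only [B.q_e, h1] at this
    exact this.symm
  exact key (fun i j => m j i)
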